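/- (Proposition 2) Under the hypotheses of Proposition 1, suppose additionally that V'(φ) > 0 for φ > 0 and V'(φ) < 0 for φ < 0. Then lim_{t→∞} φ(t) exists (in the extended reals) and equals +∞, 0, or −∞. -/

import Mathlib

open Filter Set Topology

lemma gronwall_zero {f f' : ℝ → ℝ} {a b K : ℝ}
    (hf : ContinuousOn f (Icc a b))
    (hf' : ∀ x ∈ Ico a b, HasDerivAt f (f' x) x)
    (ha : f a = 0)
    (bound : ∀ x ∈ Ico a b, |f' x| ≤ K * |f x|) :
    ∀ x ∈ Icc a b, f x = 0 := by
  intro x hx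
  have h := norm_le_gronwallBound_of_norm_deriv_right_le (δ := 0) (K := K) (ε := 0) hf
    (fun t ht => (hf' t ht).hasDerivWithinAt) (by simp [ha]) (by
      intro t ht
      simpa [Real.norm_eq_abs] using bound t ht) x hx
  rw [gronwallBound_ε0_δ0] at h
  rw [Real.norm_eq_abs] at h
  exact abs_eq_zero.mp (le_antisymm h (abs_nonneg _))

lemma contOn_of_hasDerivAt {f g : ℝ → ℝ} {t₀ : ℝ} (h : ∀ t, t₀ ≤ t → HasDerivAt f (g t) t) :
    ContinuousOn f (Ici t₀) := fun t ht => ((h t ht).continuousAt).continuousWithinAt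

lemma deriv_cont_of_contDiff2 {V : ℝ → ℝ} (h : ContDiff ℝ 2 V) : Continuous (deriv V) := by
  have h2 : ContDiff ℝ ((1 : ℕ∞)+1) V := h
  exact ((contDiff_succ_iff_deriv.mp h2).2.2).continuous

set_option maxHeartbeats 2000000 in
lemma escape (φ y ρm H : ℝ → ℝ) (G R : ℝ → ℝ) (t₀ η H₀ Y Cm a b : ℝ)
    (ha : 0 < a) (hab : a < b)
    (hGcont : Continuous G) (hRcont : Continuous R)
    (hGpos : ∀ s, 0 < s → 0 < G s)
    (hφd : ∀ t, t₀ ≤ t → HasDerivAt φ (y t) t)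
    (hyd : ∀ t, t₀ ≤ t → HasDerivAt y (-3 * H t * y t - G (φ t) + ρm t * R (φ t)) t)
    (hmcont : ContinuousOn ρm (Ici t₀))
    (hHcont : ContinuousOn H (Ici t₀))
    (hmnn : ∀ t, t₀ ≤ t → 0 ≤ ρm t)
    (hHnn : ∀ t, t₀ ≤ t → 0 ≤ H t)
    (hHle : ∀ t, t₀ ≤ t → H t ≤ H₀)
    (hηH : ∀ t, t₀ ≤ t → η ≤ H t)
    (hY : ∀ t, t₀ ≤ t → |y t| ≤ Y)
    (hCm : 0 ≤ Cm)
    (htaily : ∀ t t', t₀ ≤ t → t ≤ t' → (∫ s in t..t', (y s)^2) ≤ 2 * (H t - η))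
    (htailm : ∀ t t', t₀ ≤ t → t ≤ t' → (∫ s in t..t', ρm s) ≤ Cm * (H t - η))
    (hHlim : Tendsto H atTop (𝓝 η)) :
    ∀ᶠ t in atTop, φ t ∉ Icc a b := by
  have hY0 : 0 ≤ Y := le_trans (abs_nonneg _) (hY t₀ le_rfl)
  have hH00 : 0 ≤ H₀ := le_trans (hHnn t₀ le_rfl) (hHle t₀ le_rfl)
  set P : Set ℝ := Icc (a/2) (b+1) with hP
  have hPne : P.Nonempty := nonempty_Icc.mpr (by linarith)
  obtain ⟨s₀, hs₀P, hs₀min⟩ := isCompact_Icc.exists_isMinOn hPne hGcont.continuousOn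
  set δ := G s₀ with hδdef
  have hδ : 0 < δ := hGpos s₀ (lt_of_lt_of_le (by linarith) hs₀P.1)
  obtain ⟨M₀, hM₀⟩ := isCompact_Icc.exists_bound_of_continuousOn hRcont.continuousOn
  set M := max M₀ 0 with hMdef
  have hM0 : 0 ≤ M := le_max_right _ _
  have hMb : ∀ s ∈ P, |R s| ≤ M := fun s hs =>
    le_trans (by simpa using hM₀ s hs) (le_max_left _ _)
  set T := (2*Y+1)/δ with hTdef
  have hT : 0 < T := div_pos (by linarith) hδ
  have hδT : δ * T = 2*Y+1 := by
    rw [hTdef]; field_simp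
  set ν := min (a/2) 1 with hνdef
  have hν : 0 < ν := lt_min (by linarith) one_pos
  set ε₂ := ν / T with hε₂def
  have hε₂ : 0 < ε₂ := div_pos hν hT
  have hε₂T : ε₂ * T = ν := by rw [hε₂def]; field_simp
  set ε' := 1/(3*(H₀+1)*T) with hε'def
  have hε' : 0 < ε' := by positivity
  have hε'T : ε' * T = 1/(3*(H₀+1)) := by rw [hε'def]; field_simp
  set ε₁ := (1/2)/(3*(H₀+1)/ε' + M*Cm + 1) with hε₁def
  have denpos : 0 < 3*(H₀+1)/ε' + M*Cm + 1 := by positivity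
  have hε₁ : 0 < ε₁ := by positivity
  have hε₁eq : (3*(H₀+1)/ε' + M*Cm + 1) * ε₁ = 1/2 := by
    rw [hε₁def]; field_simp
  have hycont : ContinuousOn y (Ici t₀) := contOn_of_hasDerivAt hyd
  have hφcont : ContinuousOn φ (Ici t₀) := contOn_of_hasDerivAt hφd
  have hminpos : (0:ℝ) < min ε₁ (ν*ε₂/2) := lt_min hε₁ (by positivity)
  have hev1 : ∀ᶠ t in atTop, H t - η < min ε₁ (ν*ε₂/2) := by
    filter_upwards [hHlim.eventually (gt_mem_nhds
      (lt_add_of_pos_right η hminpos))] with t h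
    have h2 : H t < η + min ε₁ (ν*ε₂/2) := h
    linarith
  filter_upwards [hev1, eventually_ge_atTop t₀] with t hsm ht₀
  intro hmem
  have hDnn : 0 ≤ H t - η := sub_nonneg.mpr (hηH t ht₀)
  have hD1 : H t - η < ε₁ := lt_of_lt_of_le hsm (min_le_left _ _)
  have hD2 : H t - η < ν*ε₂/2 := lt_of_lt_of_le hsm (min_le_right _ _)
  have hsub : Icc t (t+T) ⊆ Ici t₀ := fun s hs => le_trans ht₀ hs.1
  have huIcc : uIcc t (t+T) = Icc t (t+T) := uIcc_of_le (by linarith)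
  have hyC : ContinuousOn y (Icc t (t+T)) := hycont.mono hsub
  have iy2 : IntervalIntegrable (fun s => (y s)^2) MeasureTheory.volume t (t+T) :=
    (by rw [huIcc]; exact hyC.pow 2 : ContinuousOn _ (uIcc t (t+T))).intervalIntegrable
  have iyabs : IntervalIntegrable (fun s => |y s|) MeasureTheory.volume t (t+T) :=
    (by rw [huIcc]; exact hyC.abs : ContinuousOn _ (uIcc t (t+T))).intervalIntegrable
  have imm : IntervalIntegrable ρm MeasureTheory.volume t (t+T) :=
    (by rw [huIcc]; exact hmcont.mono hsub : ContinuousOn _ (uIcc t (t+T))).intervalIntegrable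
  have hIy2 : (∫ s in t..t+T, (y s)^2) ≤ 2*(H t - η) := htaily t (t+T) ht₀ (by linarith)
  -- J bound
  have hJ : ∀ ε : ℝ, 0 < ε → (∫ s in t..t+T, |y s|) ≤ (H t - η)/ε + ε*T/2 := by
    intro ε hε
    have hpt : ∀ s ∈ Icc t (t+T), |y s| ≤ (y s)^2/(2*ε) + ε/2 := by
      intro s _
      have key : |y s| * (2*ε) ≤ (y s)^2 + ε*ε := by
        nlinarith [sq_nonneg (|y s| - ε), sq_abs (y s)]
      have h2 : (y s)^2/(2*ε) + ε/2 = ((y s)^2 + ε*ε)/(2*ε) := by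
        field_simp
      rw [h2, le_div_iff₀ (by positivity)]
      exact key
    have int2 : IntervalIntegrable (fun s => (y s)^2/(2*ε) + ε/2) MeasureTheory.volume t (t+T) :=
      (iy2.div_const _).add intervalIntegrable_const
    have h1 : (∫ s in t..t+T, |y s|) ≤ ∫ s in t..t+T, ((y s)^2/(2*ε) + ε/2) :=
      intervalIntegral.integral_mono_on (by linarith) iyabs int2 hpt
    have h2 : (∫ s in t..t+T, ((y s)^2/(2*ε) + ε/2)) =
        (∫ s in t..t+T, (y s)^2)/(2*ε) + ε/2*T := by
      rw [intervalIntegral.integral_add (iy2.div_const _) intervalIntegrable_const,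
        intervalIntegral.integral_div, intervalIntegral.integral_const]
      simp
      ring
    rw [h2] at h1
    have h4 : 2*(H t - η)/(2*ε) = (H t - η)/ε := by ring
    have h3 : (∫ s in t..t+T, (y s)^2)/(2*ε) ≤ (H t - η)/ε := by
      rw [← h4]; gcongr
    linarith
  -- oscillation of φ on the window
  have hosc : ∀ s ∈ Icc t (t+T), |φ s - φ t| ≤ ν := by
    intro s hs
    have hts : t ≤ s := hs.1
    have hsub2 : Icc t s ⊆ Ici t₀ := fun u hu => le_trans ht₀ hu.1
    have iy : IntervalIntegrable y MeasureTheory.volume t s :=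
      (by rw [uIcc_of_le hts]; exact hycont.mono hsub2 :
        ContinuousOn _ (uIcc t s)).intervalIntegrable
    have ftc : (∫ u in t..s, y u) = φ s - φ t :=
      intervalIntegral.integral_eq_sub_of_hasDerivAt
        (fun u hu => hφd u (le_trans ht₀ (by rw [uIcc_of_le hts] at hu; exact hu.1))) iy
    have h1 : |φ s - φ t| ≤ ∫ u in t..s, |y u| := by
      rw [← ftc]; exact intervalIntegral.abs_integral_le_integral_abs hts
    have h2 : (∫ u in t..s, |y u|) ≤ ∫ u in t..t+T, |y u| := by
      have i1 : IntervalIntegrable (fun u => |y u|) MeasureTheory.volume t s :=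
        iyabs.mono_set (by rw [huIcc, uIcc_of_le hts]; exact Icc_subset_Icc le_rfl hs.2)
      have i2 : IntervalIntegrable (fun u => |y u|) MeasureTheory.volume s (t+T) :=
        iyabs.mono_set (by rw [huIcc, uIcc_of_le hs.2]; exact Icc_subset_Icc hs.1 le_rfl)
      have hadj := intervalIntegral.integral_add_adjacent_intervals i1 i2
      have pos : 0 ≤ ∫ u in s..(t+T), |y u| :=
        intervalIntegral.integral_nonneg hs.2 (fun u _ => abs_nonneg _)
      linarith [hadj]
    have h3 := hJ ε₂ hε₂
    have h4 : (H t - η)/ε₂ ≤ ν/2 := by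
      rw [div_le_iff₀ hε₂]
      nlinarith [hD2]
    linarith [hε₂T]
  -- φ stays in P on the window
  have hφP : ∀ s ∈ Icc t (t+T), φ s ∈ P := by
    intro s hs
    have h1 := abs_le.mp (hosc s hs)
    have hν1 : ν ≤ a/2 := min_le_left _ _
    have hν2 : ν ≤ 1 := min_le_right _ _
    constructor
    · linarith [hmem.1, h1.1]
    · linarith [hmem.2, h1.2]
  -- the derivative of y integrated over the window
  set w : ℝ → ℝ := fun s => -3*H s*y s - G (φ s) + ρm s * R (φ s) with hwdef
  have hwcont : ContinuousOn w (Icc t (t+T)) := by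
    apply ContinuousOn.add
    · exact ((continuousOn_const.mul (hHcont.mono hsub)).mul hyC).sub
        (hGcont.comp_continuousOn (hφcont.mono hsub))
    · exact (hmcont.mono hsub).mul (hRcont.comp_continuousOn (hφcont.mono hsub))
  have iw : IntervalIntegrable w MeasureTheory.volume t (t+T) :=
    (by rw [huIcc]; exact hwcont : ContinuousOn _ (uIcc t (t+T))).intervalIntegrable
  have ftcy : (∫ s in t..t+T, w s) = y (t+T) - y t :=
    intervalIntegral.integral_eq_sub_of_hasDerivAt
      (fun s hs => hyd s (le_trans ht₀ (by rw [huIcc] at hs; exact hs.1))) iw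
  have hwle : ∀ s ∈ Icc t (t+T), w s ≤ -δ + (3*H₀*|y s| + M*ρm s) := by
    intro s hs
    have hs₀ : t₀ ≤ s := hsub hs
    have hPs := hφP s hs
    have e1 : H s * (-y s) ≤ H s * |y s| :=
      mul_le_mul_of_nonneg_left (neg_le_abs _) (hHnn s hs₀)
    have e2 : H s * |y s| ≤ H₀ * |y s| :=
      mul_le_mul_of_nonneg_right (hHle s hs₀) (abs_nonneg _)
    have h2 : δ ≤ G (φ s) := hs₀min hPs
    have hm : 0 ≤ ρm s := hmnn s hs₀
    have e3 : ρm s * R (φ s) ≤ ρm s * |R (φ s)| :=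
      mul_le_mul_of_nonneg_left (le_abs_self _) hm
    have e4 : ρm s * |R (φ s)| ≤ ρm s * M := mul_le_mul_of_nonneg_left (hMb _ hPs) hm
    simp only [hwdef]
    nlinarith
  have iub : IntervalIntegrable (fun s => -δ + (3*H₀*|y s| + M*ρm s))
      MeasureTheory.volume t (t+T) :=
    intervalIntegrable_const.add ((iyabs.const_mul _).add (imm.const_mul _))
  have hint : y (t+T) - y t ≤
      -δ*T + (3*H₀*(∫ s in t..t+T, |y s|) + M*(∫ s in t..t+T, ρm s)) := by
    rw [← ftcy]
    have h1 := intervalIntegral.integral_mono_on (by linarith : t ≤ t+T) iw iub hwle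
    have h2 : (∫ s in t..t+T, (-δ + (3*H₀*|y s| + M*ρm s)))
        = -δ*T + (3*H₀*(∫ s in t..t+T, |y s|) + M*(∫ s in t..t+T, ρm s)) := by
      rw [intervalIntegral.integral_add intervalIntegrable_const
          ((iyabs.const_mul _).add (imm.const_mul _)),
        intervalIntegral.integral_add (iyabs.const_mul _) (imm.const_mul _),
        intervalIntegral.integral_const_mul, intervalIntegral.integral_const_mul,
        intervalIntegral.integral_const]
      simp
      ring
    rw [h2] at h1
    exact h1
  -- numerics
  have hJ' := hJ ε' hε'
  have hm' := htailm t (t+T) ht₀ (by linarith)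
  have hylb : -(2*Y) ≤ y (t+T) - y t := by
    have h1 := abs_le.mp (hY (t+T) (by linarith))
    have h2 := abs_le.mp (hY t ht₀)
    linarith [h1.1, h2.2]
  have c1 : 3*H₀*(∫ s in t..t+T, |y s|) ≤ 3*H₀*((H t - η)/ε') + 3*H₀*(ε'*T)/2 := by
    nlinarith [hJ', hH00]
  have c2 : M*(∫ s in t..t+T, ρm s) ≤ M*(Cm*(H t - η)) := by
    nlinarith [hM0, hm']
  have c3 : 3*H₀*(ε'*T)/2 ≤ 1/2 := by
    rw [hε'T]
    have hpos : (0:ℝ) < 3*(H₀+1) := by linarith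
    have h5 : 3*H₀*(1/(3*(H₀+1))) ≤ 1 := by
      rw [mul_one_div, div_le_one hpos]; linarith
    linarith
  have c4 : 3*H₀*((H t - η)/ε') + M*(Cm*(H t - η)) < 1/2 := by
    have hc0 : 0 ≤ 3*H₀/ε' + M*Cm := by positivity
    have e : 3*H₀*((H t - η)/ε') + M*(Cm*(H t - η)) = (3*H₀/ε' + M*Cm)*(H t - η) := by
      ring
    have a1 : (3*H₀/ε' + M*Cm)*(H t - η) ≤ (3*H₀/ε' + M*Cm)*ε₁ :=
      mul_le_mul_of_nonneg_left hD1.le hc0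
    have hcoef : 3*H₀/ε' + M*Cm ≤ 3*(H₀+1)/ε' + M*Cm := by
      have h6 : 3*H₀/ε' ≤ 3*(H₀+1)/ε' := by gcongr <;> linarith
      linarith
    have a2 : (3*H₀/ε' + M*Cm)*ε₁ ≤ (3*(H₀+1)/ε' + M*Cm)*ε₁ :=
      mul_le_mul_of_nonneg_right hcoef hε₁.le
    have a3 : (3*(H₀+1)/ε' + M*Cm)*ε₁ = 1/2 - ε₁ := by
      have h7 : (3*(H₀+1)/ε' + M*Cm + 1)*ε₁ = (3*(H₀+1)/ε' + M*Cm)*ε₁ + ε₁ := by ring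
      linarith [hε₁eq]
    rw [e]
    linarith [a1, a2, a3, hε₁]
  have hfinal : y (t+T) - y t < -(2*Y) := by
    have hδT' : -δ*T = -(2*Y+1) := by linarith [hδT]
    calc y (t+T) - y t ≤ -δ*T + (3*H₀*(∫ s in t..t+T, |y s|)
          + M*(∫ s in t..t+T, ρm s)) := hint
      _ ≤ -(2*Y+1) + (3*H₀*((H t - η)/ε') + 3*H₀*(ε'*T)/2 + M*(Cm*(H t - η))) := by
          rw [← hδT']; linarith [c1, c2]
      _ < -(2*Y+1) + 1 := by linarith [c3, c4]
      _ = -(2*Y) := by ring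
  linarith [hylb, hfinal]


set_option maxHeartbeats 2000000 in
/-- Proposition 1: if `V ≥ 0` with `V(φ) = 0 ⟺ φ = 0`, `V'` is bounded on every set
on which `V` is bounded, and `χ'/χ ≤ 2K/((2−γ)(4−3γ))` for some constant `K ≠ 0`,
then along any solution of the cosmological system with `H(t₀) > 0`,
`(ρ_m, ρ_r, y) → (0, 0, 0)` as `t → ∞`. -/
theorem stmt4 (H ρm ρr y φ V χ : ℝ → ℝ) (γ t₀ K : ℝ)
    (hγ0 : 0 < γ) (hγ2 : γ < 2) (hγ43 : γ ≠ 4/3)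
    (hχpos : ∀ s, 0 < χ s)
    (hVC2 : ContDiff ℝ 2 V) (hχC2 : ContDiff ℝ 2 χ)
    (hVnn : ∀ s, 0 ≤ V s)
    (hVzero : ∀ s, V s = 0 ↔ s = 0)
    (hV'bdd : ∀ A : Set ℝ, (∃ B, ∀ s ∈ A, V s ≤ B) → ∃ B', ∀ s ∈ A, |deriv V s| ≤ B')
    (hK : K ≠ 0)
    (hχbd : ∀ s, deriv χ s / χ s ≤ 2*K / ((2-γ)*(4-3*γ)))
    (hH : ∀ t, t₀ ≤ t →
      HasDerivAt H (-(1/2) * (γ * ρm t + (4/3) * ρr t + (y t)^2)) t)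
    (hm : ∀ t, t₀ ≤ t →
      HasDerivAt ρm (-3*γ*H t*ρm t - (1/2)*(4-3*γ)*ρm t*y t*(deriv χ (φ t) / χ (φ t))) t)
    (hr : ∀ t, t₀ ≤ t → HasDerivAt ρr (-4*H t*ρr t) t)
    (hy : ∀ t, t₀ ≤ t →
      HasDerivAt y (-3*H t*y t - deriv V (φ t) + (1/2)*(4-3*γ)*ρm t*(deriv χ (φ t) / χ (φ t))) t)
    (hφ : ∀ t, t₀ ≤ t → HasDerivAt φ (y t) t)
    (hconstraint : ∀ t, t₀ ≤ t →
      3*(H t)^2 = (1/2)*(y t)^2 + V (φ t) + ρm t + ρr t)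
    (hmnn : ∀ t, t₀ ≤ t → 0 ≤ ρm t)
    (hrnn : ∀ t, t₀ ≤ t → 0 ≤ ρr t)
    (hH0 : 0 < H t₀)
    (hVinc : ∀ s, 0 < s → 0 < deriv V s)
    (hVdec : ∀ s, s < 0 → deriv V s < 0) :
    Tendsto φ atTop atTop ∨ Tendsto φ atTop (nhds 0) ∨ Tendsto φ atTop atBot := by
  classical
  have hVd : Continuous (deriv V) := deriv_cont_of_contDiff2 hVC2
  have hχd : Continuous (deriv χ) := deriv_cont_of_contDiff2 hχC2
  have hχc : Continuous χ := hχC2.continuous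
  have hHc : ContinuousOn H (Ici t₀) := contOn_of_hasDerivAt hH
  have hmc : ContinuousOn ρm (Ici t₀) := contOn_of_hasDerivAt hm
  have hrc : ContinuousOn ρr (Ici t₀) := contOn_of_hasDerivAt hr
  have hyc : ContinuousOn y (Ici t₀) := contOn_of_hasDerivAt hy
  have hφc : ContinuousOn φ (Ici t₀) := contOn_of_hasDerivAt hφ
  -- Step 1 : H is nonnegative on [t₀, ∞)
  have hHnn : ∀ t, t₀ ≤ t → 0 ≤ H t := by
    intro t₁ ht₁
    by_contra hneg
    push_neg at hneg
    have ht₁' : t₀ < t₁ := by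
      rcases eq_or_lt_of_le ht₁ with h | h
      · exfalso; rw [← h] at hneg; linarith
      · exact h
    set S : Set ℝ := {u : ℝ | u ∈ Icc t₀ t₁ ∧ 0 ≤ H u} with hS
    have hSne : S.Nonempty := ⟨t₀, ⟨le_rfl, ht₁'.le⟩, hH0.le⟩
    have hSbdd : BddAbove S := ⟨t₁, fun u hu => hu.1.2⟩
    have hScl : IsClosed S := by
      have : S = Icc t₀ t₁ ∩ H ⁻¹' Ici 0 := by
        ext u; simp [hS, and_comm]
      rw [this]
      exact (hHc.mono (Icc_subset_Ici_self)).preimage_isClosed_of_isClosed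
        isClosed_Icc isClosed_Ici
    set s := sSup S with hs
    have hsS : s ∈ S := hScl.csSup_mem hSne hSbdd
    have hs₀ : t₀ ≤ s := hsS.1.1
    have hst₁ : s ≤ t₁ := hsS.1.2
    have hst₁' : s < t₁ := by
      rcases eq_or_lt_of_le hst₁ with h | h
      · exfalso; have := hsS.2; rw [h] at this; linarith
      · exact h
    have hIocneg : ∀ u, u ∈ Ioc s t₁ → H u < 0 := by
      intro u hu
      by_contra hge
      push_neg at hge
      have huS : u ∈ S := ⟨⟨le_trans hs₀ hu.1.le, hu.2⟩, hge⟩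
      exact absurd (le_csSup hSbdd huS) (not_le.mpr hu.1)
    have hHs0 : H s = 0 := by
      have hle : H s ≤ 0 := by
        have htend : Tendsto H (𝓝[>] s) (𝓝 (H s)) :=
          ((hH s hs₀).continuousAt).continuousWithinAt
        refine le_of_tendsto htend ?_
        filter_upwards [Ioc_mem_nhdsGT_of_mem ⟨le_rfl, hst₁'⟩] with u hu
        exact (hIocneg u hu).le
      exact le_antisymm hle hsS.2
    have hIccsub : Icc s t₁ ⊆ Ici t₀ := fun x hx => le_trans hs₀ hx.1
    -- at s, everything vanishes
    have hcon := hconstraint s hs₀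
    rw [hHs0] at hcon
    norm_num at hcon
    have hρms : ρm s = 0 := by
      nlinarith [hVnn (φ s), hmnn s hs₀, hrnn s hs₀, sq_nonneg (y s)]
    have hρrs : ρr s = 0 := by
      nlinarith [hVnn (φ s), hmnn s hs₀, hrnn s hs₀, sq_nonneg (y s)]
    -- bound for |H| on [s,t₁]
    obtain ⟨MH, hMH⟩ := isCompact_Icc.exists_bound_of_continuousOn
      (hHc.mono hIccsub)
    -- ρr vanishes on [s,t₁]
    have hρr0 : ∀ x ∈ Icc s t₁, ρr x = 0 := by
      apply gronwall_zero (f' := fun x => -4*H x*ρr x) (K := 4*MH)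
        (hrc.mono hIccsub)
        (fun x hx => hr x (le_trans hs₀ hx.1)) hρrs
      intro x hx
      have h1 : |(-4*H x*ρr x)| = 4*|H x| * |ρr x| := by
        rw [abs_mul, abs_mul]; norm_num
      rw [h1]
      have h2 := hMH x (Ico_subset_Icc_self hx)
      rw [Real.norm_eq_abs] at h2
      nlinarith [abs_nonneg (ρr x), abs_nonneg (H x)]
    -- ρm vanishes on [s,t₁]
    have hcmc : ContinuousOn (fun x => -3*γ*H x - (1/2)*(4-3*γ)*y x*(deriv χ (φ x) / χ (φ x)))
        (Icc s t₁) := by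
      apply ContinuousOn.sub
      · exact continuousOn_const.mul (hHc.mono hIccsub)
      · exact (continuousOn_const.mul (hyc.mono hIccsub)).mul
          (((hχd.comp_continuousOn (hφc.mono hIccsub))).div
            (hχc.comp_continuousOn (hφc.mono hIccsub))
            (fun x _ => (hχpos (φ x)).ne'))
    obtain ⟨Mc, hMc⟩ := isCompact_Icc.exists_bound_of_continuousOn hcmc
    have hρm0 : ∀ x ∈ Icc s t₁, ρm x = 0 := by
      apply gronwall_zero
        (f' := fun x => -3*γ*H x*ρm x - (1/2)*(4-3*γ)*ρm x*y x*(deriv χ (φ x) / χ (φ x)))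
        (K := max Mc 0) (hmc.mono hIccsub)
        (fun x hx => hm x (le_trans hs₀ hx.1)) hρms
      intro x hx
      have h1 : -3*γ*H x*ρm x - (1/2)*(4-3*γ)*ρm x*y x*(deriv χ (φ x) / χ (φ x))
          = (-3*γ*H x - (1/2)*(4-3*γ)*y x*(deriv χ (φ x) / χ (φ x))) * ρm x := by ring
      rw [h1, abs_mul]
      have h2 := hMc x (Ico_subset_Icc_self hx)
      rw [Real.norm_eq_abs] at h2
      have h3 : |(-3*γ*H x - (1/2)*(4-3*γ)*y x*(deriv χ (φ x) / χ (φ x)))| ≤ max Mc 0 :=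
        le_trans h2 (le_max_left _ _)
      exact mul_le_mul_of_nonneg_right h3 (abs_nonneg _)
    -- H vanishes on [s,t₁] : contradiction
    have hH0' : ∀ x ∈ Icc s t₁, H x = 0 := by
      apply gronwall_zero (f' := fun x => -(1/2) * (γ * ρm x + (4/3) * ρr x + (y x)^2))
        (K := 3*MH) (hHc.mono hIccsub)
        (fun x hx => hH x (le_trans hs₀ hx.1)) hHs0
      intro x hx
      have hx' : x ∈ Icc s t₁ := Ico_subset_Icc_self hx
      have hx₀ : t₀ ≤ x := le_trans hs₀ hx.1
      have e1 : ρm x = 0 := hρm0 x hx'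
      have e2 : ρr x = 0 := hρr0 x hx'
      have hcx := hconstraint x hx₀
      rw [e1, e2] at hcx
      have h1 : |(-(1/2) * (γ * ρm x + (4/3) * ρr x + (y x)^2))| = (1/2)*(y x)^2 := by
        rw [e1, e2]
        rw [abs_of_nonpos (by nlinarith [sq_nonneg (y x)])]
        ring
      rw [h1]
      have h2 := hMH x hx'
      rw [Real.norm_eq_abs] at h2
      have h3 : (1/2)*(y x)^2 ≤ 3*(H x)^2 := by nlinarith [hVnn (φ x)]
      have h4 : (H x)^2 = |H x| * |H x| := by rw [← abs_mul, abs_mul_self]; ring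
      nlinarith [abs_nonneg (H x)]
    have := hH0' t₁ ⟨hst₁, le_rfl⟩
    linarith
  -- Step 2 : H is antitone on [t₀, ∞)
  have hHanti : AntitoneOn H (Ici t₀) := by
    apply antitoneOn_of_deriv_nonpos (convex_Ici t₀) hHc
    · intro x hx
      rw [interior_Ici] at hx
      exact ((hH x (le_of_lt hx)).differentiableAt).differentiableWithinAt
    · intro x hx
      rw [interior_Ici] at hx
      rw [(hH x (le_of_lt hx)).deriv]
      nlinarith [mul_nonneg hγ0.le (hmnn x hx.le), hrnn x hx.le, sq_nonneg (y x)]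
  -- Step 3 : the limit η of H
  set Ht : ℝ → ℝ := fun u => H (max u t₀) with hHt
  have hHtanti : Antitone Ht := fun u v huv =>
    hHanti (mem_Ici.mpr (le_max_right _ _)) (mem_Ici.mpr (le_max_right _ _)) (max_le_max huv le_rfl)
  have hbdd : BddBelow (range Ht) := by
    refine ⟨0, ?_⟩
    rintro x ⟨u, rfl⟩
    exact hHnn _ (le_max_right _ _)
  set η := ⨅ u, Ht u with hη
  have hHtlim : Tendsto Ht atTop (𝓝 η) := tendsto_atTop_ciInf hHtanti hbdd
  have heq : Ht =ᶠ[atTop] H := by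
    filter_upwards [eventually_ge_atTop t₀] with u hu
    simp only [hHt]
    rw [max_eq_left hu]
  have hHlim : Tendsto H atTop (𝓝 η) := hHtlim.congr' heq
  have hη0 : 0 ≤ η := le_ciInf (fun u => hHnn _ (le_max_right _ _))
  have hηle : ∀ u, t₀ ≤ u → η ≤ H u := by
    intro u hu
    have h := ciInf_le hbdd u
    rw [hη]
    simpa [hHt, max_eq_left hu] using h
  have hHle : ∀ u, t₀ ≤ u → H u ≤ H t₀ := fun u hu => hHanti self_mem_Ici hu hu
  -- Step 4 : uniform bounds
  set E₀ := 3*(H t₀)^2 with hE₀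
  have hcon0 : ∀ u, t₀ ≤ u → 3*(H u)^2 ≤ E₀ := by
    intro u hu
    have h1 := hHnn u hu; have h2 := hHle u hu
    rw [hE₀]; nlinarith
  set Y := Real.sqrt (2*E₀) with hY
  have hYb : ∀ u, t₀ ≤ u → |y u| ≤ Y := by
    intro u hu
    have h1 := hconstraint u hu
    have h2 : (y u)^2 ≤ 2*E₀ := by
      nlinarith [hVnn (φ u), hmnn u hu, hrnn u hu, hcon0 u hu]
    calc |y u| = Real.sqrt ((y u)^2) := by rw [Real.sqrt_sq_eq_abs]
      _ ≤ Real.sqrt (2*E₀) := Real.sqrt_le_sqrt h2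
  -- Step 5 : tail integral bounds
  have hg : ∀ u v, t₀ ≤ u → u ≤ v →
      (∫ x in u..v, (γ * ρm x + (4/3) * ρr x + (y x)^2)) = 2*(H u - H v) := by
    intro u v hu huv
    have hsub : uIcc u v ⊆ Ici t₀ := by
      rw [uIcc_of_le huv]; exact fun x hx => le_trans hu hx.1
    have hcont : ContinuousOn (fun x => γ * ρm x + (4/3) * ρr x + (y x)^2) (uIcc u v) := by
      apply ContinuousOn.add
      apply ContinuousOn.add
      · exact continuousOn_const.mul (hmc.mono hsub)
      · exact continuousOn_const.mul (hrc.mono hsub)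
      · exact (hyc.mono hsub).pow 2
    have hftc := intervalIntegral.integral_eq_sub_of_hasDerivAt (f := H)
      (f' := fun x => -(1/2) * (γ * ρm x + (4/3) * ρr x + (y x)^2))
      (fun x hx => hH x (hsub hx)) ((continuousOn_const.mul hcont).intervalIntegrable)
    have h2 : (∫ x in u..v, -(1/2) * (γ * ρm x + (4/3) * ρr x + (y x)^2))
        = -(1/2) * ∫ x in u..v, (γ * ρm x + (4/3) * ρr x + (y x)^2) :=
      intervalIntegral.integral_const_mul _ _
    rw [h2] at hftc
    linarith
  have hgint : ∀ u v, t₀ ≤ u → u ≤ v →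
      IntervalIntegrable (fun x => γ * ρm x + (4/3) * ρr x + (y x)^2)
        MeasureTheory.volume u v := by
    intro u v hu huv
    have hsub : uIcc u v ⊆ Ici t₀ := by
      rw [uIcc_of_le huv]; exact fun x hx => le_trans hu hx.1
    apply ContinuousOn.intervalIntegrable
    apply ContinuousOn.add
    apply ContinuousOn.add
    · exact continuousOn_const.mul (hmc.mono hsub)
    · exact continuousOn_const.mul (hrc.mono hsub)
    · exact (hyc.mono hsub).pow 2
  have htaily : ∀ u v, t₀ ≤ u → u ≤ v → (∫ x in u..v, (y x)^2) ≤ 2*(H u - η) := by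
    intro u v hu huv
    have hsub : uIcc u v ⊆ Ici t₀ := by
      rw [uIcc_of_le huv]; exact fun x hx => le_trans hu hx.1
    have h1 := hg u v hu huv
    have hle : (∫ x in u..v, (y x)^2)
        ≤ ∫ x in u..v, (γ * ρm x + (4/3) * ρr x + (y x)^2) := by
      apply intervalIntegral.integral_mono_on huv
        (((hyc.mono hsub).pow 2).intervalIntegrable) (hgint u v hu huv)
      intro x hx
      have hx₀ : t₀ ≤ x := le_trans hu hx.1
      show (y x)^2 ≤ _
      nlinarith [mul_nonneg hγ0.le (hmnn x hx₀), hrnn x hx₀]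
    have h2 : η ≤ H v := hηle v (le_trans hu huv)
    linarith
  have htailm : ∀ u v, t₀ ≤ u → u ≤ v → (∫ x in u..v, ρm x) ≤ (2/γ)*(H u - η) := by
    intro u v hu huv
    have hsub : uIcc u v ⊆ Ici t₀ := by
      rw [uIcc_of_le huv]; exact fun x hx => le_trans hu hx.1
    have h1 := hg u v hu huv
    have hle : (∫ x in u..v, γ * ρm x)
        ≤ ∫ x in u..v, (γ * ρm x + (4/3) * ρr x + (y x)^2) := by
      apply intervalIntegral.integral_mono_on huv
        ((continuousOn_const.mul (hmc.mono hsub)).intervalIntegrable) (hgint u v hu huv)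
      intro x hx
      have hx₀ : t₀ ≤ x := le_trans hu hx.1
      show γ * ρm x ≤ _
      nlinarith [hrnn x hx₀, sq_nonneg (y x)]
    have h2 : η ≤ H v := hηle v (le_trans hu huv)
    have h3 : (∫ x in u..v, γ * ρm x) = γ * ∫ x in u..v, ρm x :=
      intervalIntegral.integral_const_mul _ _
    rw [h3] at hle
    rw [div_mul_eq_mul_div, le_div_iff₀ hγ0]
    linarith [mul_comm (∫ x in u..v, ρm x) γ]
  -- Step 6 : the escape lemma, on both sides
  have hCm : (0:ℝ) ≤ 2/γ := by positivity
  have keyP : ∀ a b : ℝ, 0 < a → a < b → ∀ᶠ u in atTop, φ u ∉ Icc a b := by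
    intro a b ha hab
    refine escape φ y ρm H (deriv V) (fun s => (1/2)*(4-3*γ)*(deriv χ s / χ s))
      t₀ η (H t₀) Y (2/γ) a b ha hab hVd ?_ hVinc hφ ?_ hmc hHc hmnn hHnn hHle hηle hYb
      hCm htaily htailm hHlim
    · exact continuous_const.mul (hχd.div hχc (fun s => (hχpos s).ne'))
    · intro u hu
      have h0 := hy u hu
      have e : -3*H u*y u - deriv V (φ u) + (1/2)*(4-3*γ)*ρm u*(deriv χ (φ u) / χ (φ u))
          = -3*H u*y u - deriv V (φ u) + ρm u * ((1/2)*(4-3*γ)*(deriv χ (φ u) / χ (φ u))) := by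
        ring
      rw [e] at h0
      exact h0
  have keyM : ∀ a b : ℝ, 0 < a → a < b → ∀ᶠ u in atTop, φ u ∉ Icc (-b) (-a) := by
    intro a b ha hab
    have hneg := escape (fun u => -φ u) (fun u => -y u) ρm H
      (fun s => -(deriv V (-s))) (fun s => -((1/2)*(4-3*γ)*(deriv χ (-s) / χ (-s))))
      t₀ η (H t₀) Y (2/γ) a b ha hab
      ((hVd.comp continuous_neg).neg)
      ((continuous_const.mul ((hχd.comp continuous_neg).div (hχc.comp continuous_neg)
        (fun s => (hχpos (-s)).ne'))).neg)
      (fun s hs => by have h := hVdec (-s) (by linarith); show (0:ℝ) < -(deriv V (-s)); linarith)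
      (fun u hu => (hφ u hu).neg)
      (fun u hu => by
        have h0 := (hy u hu).neg
        have e : -(-3*H u*y u - deriv V (φ u) + (1/2)*(4-3*γ)*ρm u*(deriv χ (φ u) / χ (φ u)))
            = -3*H u*(-y u) - (-(deriv V (-(-φ u))))
              + ρm u * (-((1/2)*(4-3*γ)*(deriv χ (-(-φ u)) / χ (-(-φ u))))) := by
          simp only [neg_neg]; ring
        rw [e] at h0
        exact h0)
      hmc hHc hmnn hHnn hHle hηle
      (fun u hu => by simpa [abs_neg] using hYb u hu)
      hCm
      (fun u v hu huv => by simpa using htaily u v hu huv)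
      htailm hHlim
    filter_upwards [hneg] with u hu
    intro hmem
    exact hu ⟨by simpa using neg_le_neg hmem.2, by simpa using neg_le_neg hmem.1⟩
  -- Step 7 : assemble the trichotomy
  obtain ⟨T₁, hT₁⟩ := eventually_atTop.mp
    (((keyP 1 2 one_pos one_lt_two).and (keyM 1 2 one_pos one_lt_two)).and
      (eventually_ge_atTop t₀))
  set T₂ := max T₁ t₀ with hT₂
  have hprop : ∀ u, T₂ ≤ u → (φ u < 1 ∨ 2 < φ u) ∧ (-1 < φ u ∨ φ u < -2) := by
    intro u hu
    have h := hT₁ u (le_trans (le_max_left _ _) hu)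
    constructor
    · rcases lt_or_ge (φ u) 1 with h1 | h1
      · exact Or.inl h1
      · rcases le_or_gt (φ u) 2 with h2 | h2
        · exact absurd ⟨h1, h2⟩ h.1.1
        · exact Or.inr h2
    · rcases lt_or_ge (-1 : ℝ) (φ u) with h1 | h1
      · exact Or.inl h1
      · rcases le_or_gt (-2 : ℝ) (φ u) with h2 | h2
        · exact absurd ⟨h2, h1⟩ h.1.2
        · exact Or.inr h2
  have hT₂t₀ : t₀ ≤ T₂ := le_max_right _ _
  have hφT₂cont : ∀ u, T₂ ≤ u → ContinuousOn φ (Icc T₂ u) :=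
    fun u hu => hφc.mono (fun x hx => le_trans hT₂t₀ hx.1)
  -- no crossing lemma
  have hcross : ∀ c u, T₂ ≤ u → c ∈ uIcc (φ T₂) (φ u) →
      ∃ x, T₂ ≤ x ∧ φ x = c := by
    intro c u hu hc
    have h := intermediate_value_uIcc (f := φ) (a := T₂) (b := u)
      ((hφc.mono (fun x hx => ?_)))
    · obtain ⟨x, hx1, hx2⟩ := h hc
      rw [uIcc_of_le hu] at hx1
      exact ⟨x, hx1.1, hx2⟩
    · rw [uIcc_of_le hu] at hx
      exact le_trans hT₂t₀ hx.1
  rcases (hprop T₂ le_rfl).1 with hc1 | hc1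
  · rcases (hprop T₂ le_rfl).2 with hc2 | hc2
    · -- case : φ T₂ ∈ (-1, 1) : limit 0
      have hstay : ∀ u, T₂ ≤ u → -1 < φ u ∧ φ u < 1 := by
        intro u hu
        constructor
        · by_contra hge
          push_neg at hge
          have h2 : φ u < -2 := by
            rcases (hprop u hu).2 with h | h
            · linarith
            · exact h
          obtain ⟨x, hx1, hx2⟩ := hcross (-3/2) u hu (by
            rw [uIcc_comm]
            apply mem_uIcc.mpr
            left
            constructor <;> linarith)
          rcases (hprop x hx1).2 with h | h <;> rw [hx2] at h <;> linarith
        · by_contra hge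
          push_neg at hge
          have h2 : 2 < φ u := by
            rcases (hprop u hu).1 with h | h
            · linarith
            · exact h
          obtain ⟨x, hx1, hx2⟩ := hcross (3/2) u hu (by
            apply mem_uIcc.mpr
            left
            constructor <;> linarith)
          rcases (hprop x hx1).1 with h | h <;> rw [hx2] at h <;> linarith
      refine Or.inr (Or.inl ?_)
      rw [show (nhds (0:ℝ)) = 𝓝 0 from rfl]
      apply NormedAddCommGroup.tendsto_nhds_zero.mpr
      intro ε hε
      set ε' := min (ε/2) (1/2) with hε'
      have hε'pos : 0 < ε' := lt_min (by linarith) (by norm_num)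
      have hε'lt : ε' < 1 := lt_of_le_of_lt (min_le_right _ _) (by norm_num)
      filter_upwards [keyP ε' 1 hε'pos hε'lt, keyM ε' 1 hε'pos hε'lt,
        eventually_ge_atTop T₂] with u h1 h2 h3
      have hst := hstay u h3
      have ha1 : φ u < ε' := by
        by_contra hge
        push_neg at hge
        exact h1 ⟨hge, hst.2.le⟩
      have ha2 : -ε' < φ u := by
        by_contra hge
        push_neg at hge
        exact h2 ⟨hst.1.le, by linarith⟩
      rw [Real.norm_eq_abs, abs_lt]
      have : ε' ≤ ε/2 := min_le_left _ _
      constructor <;> linarith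
    · -- case : φ T₂ < -2 : limit -∞
      have hstay : ∀ u, T₂ ≤ u → φ u < -2 := by
        intro u hu
        by_contra hge
        push_neg at hge
        have h2 : -1 < φ u := by
          rcases (hprop u hu).2 with h | h
          · exact h
          · linarith
        obtain ⟨x, hx1, hx2⟩ := hcross (-3/2) u hu (by
          apply mem_uIcc.mpr
          left
          constructor <;> linarith)
        rcases (hprop x hx1).2 with h | h <;> rw [hx2] at h <;> linarith
      refine Or.inr (Or.inr ?_)
      apply tendsto_atBot.mpr
      intro M
      set M' := min M (-3) with hM'
      have hM'3 : M' ≤ -3 := min_le_right _ _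
      have h2M' : 2 < -M' := by linarith
      filter_upwards [keyM 2 (-M') two_pos h2M', eventually_ge_atTop T₂] with u h1 h3
      have hst := hstay u h3
      have : φ u < M' := by
        by_contra hge
        push_neg at hge
        exact h1 ⟨by simpa using hge, by linarith⟩
      linarith [min_le_left M (-3 : ℝ)]
  · -- case : φ T₂ > 2 : limit +∞
    have hstay : ∀ u, T₂ ≤ u → 2 < φ u := by
      intro u hu
      by_contra hge
      push_neg at hge
      have h2 : φ u < 1 := by
        rcases (hprop u hu).1 with h | h
        · exact h
        · linarith
      obtain ⟨x, hx1, hx2⟩ := hcross (3/2) u hu (by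
        rw [uIcc_comm]
        apply mem_uIcc.mpr
        left
        constructor <;> linarith)
      rcases (hprop x hx1).1 with h | h <;> rw [hx2] at h <;> linarith
    refine Or.inl ?_
    apply tendsto_atTop.mpr
    intro M
    set M' := max M 3 with hM'
    have hM'3 : 3 ≤ M' := le_max_right _ _
    filter_upwards [keyP 2 M' two_pos (by linarith), eventually_ge_atTop T₂] with u h1 h3
    have hst := hstay u h3
    have : M' < φ u := by
      by_contra hge
      push_neg at hge
      exact h1 ⟨hst.le, hge⟩
    linarith [le_max_left M (3:ℝ)]
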